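/- Let n ∈ ℕ, N = 2^n, let H be an N×N upper-triangular matrix over 𝔽₂ (H_{m,j} = 0 whenever m > j), and let 𝒜ᶜ ⊆ {0,…,N−1}. Suppose u ∈ 𝔽₂^N satisfies u·H = 0. Let ℓ ∈ {0,…,N−2}, let ū ∈ 𝔽₂^{ℓ+1} be any vector with ū_j = u_j for all j ≤ ℓ, and fix t ∈ {1,…,n}. Set x_{ℓ+1}^{(t)} = u_{𝒯(ℓ+1,t)}·F^{⊗t}. Then ū·H_{0:ℓ, ℒ_{ℓ+1,t}} + x_{ℓ+1}^{(t)}·Q^{(ℓ+1,t)} = 0 over 𝔽₂, where Q^{(ℓ+1,t)} = (F^{⊗t})_{*, −s(ℓ+1,t)+𝒯'(ℓ+1,t)}·H_{𝒯'(ℓ+1,t), ℒ_{ℓ+1,t}}. -/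

import Mathlib

open Matrix Finset Kronecker

/-- The 2×2 polarization kernel `F = [[1,0],[1,1]]` over `𝔽₂`. -/
def polarF : Matrix (Fin 2) (Fin 2) (ZMod 2) := !![1, 0; 1, 1]

/-- The `n`-th Kronecker power `F^{⊗n}` of the polarization kernel, a `2^n × 2^n`
matrix over `𝔽₂`. -/
def kronPow : (n : ℕ) → Matrix (Fin (2 ^ n)) (Fin (2 ^ n)) (ZMod 2)
  | 0 => 1
  | n + 1 =>
      Matrix.reindex (finProdFinEquiv.trans (finCongr (by ring)))
        (finProdFinEquiv.trans (finCongr (by ring)))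
        (Matrix.kroneckerMap (· * ·) polarF (kronPow n))

/-- `s(i,t) = 2^t·⌊i/2^t⌋`, the first index of the length-`2^t` subgraph
containing position `i`. -/
def sIdx (i t : ℕ) : ℕ := 2 ^ t * (i / 2 ^ t)

/-- The `k`-th element of the index set `𝒯(i,t) = {s(i,t),…,s(i,t)+2^t−1}`,
as an element of `Fin (2^n)` (requires `t ≤ n`). -/
def subIdx (n t : ℕ) (ht : t ≤ n) (i : Fin (2 ^ n)) (k : Fin (2 ^ t)) : Fin (2 ^ n) :=
  ⟨sIdx (i : ℕ) t + (k : ℕ), by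
    have hk := k.isLt
    have h1 : (i : ℕ) / 2 ^ t < 2 ^ n / 2 ^ t :=
      Nat.div_lt_div_of_lt_of_dvd (pow_dvd_pow 2 ht) i.isLt
    have h2 : 2 ^ t * ((i : ℕ) / 2 ^ t + 1) ≤ 2 ^ t * (2 ^ n / 2 ^ t) :=
      Nat.mul_le_mul_left _ h1
    have h3 : 2 ^ t * (2 ^ n / 2 ^ t) = 2 ^ n :=
      Nat.mul_div_cancel' (pow_dvd_pow 2 ht)
    have h4 : 2 ^ t * ((i : ℕ) / 2 ^ t + 1) = 2 ^ t * ((i : ℕ) / 2 ^ t) + 2 ^ t := by ring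
    simp only [sIdx]
    omega⟩

lemma polarF_mul_self : polarF * polarF = 1 := by
  simp [polarF]
  decide

lemma kronPow_mul_self (n : ℕ) : kronPow n * kronPow n = 1 := by
  induction n with
  | zero => simp [kronPow]
  | succ n ih =>
    rw [kronPow]
    simp only [Matrix.reindex_apply]
    rw [Matrix.submatrix_mul_equiv]
    have : Matrix.kroneckerMap (· * ·) polarF (kronPow n) *
        Matrix.kroneckerMap (· * ·) polarF (kronPow n) = 1 := by
      rw [← Matrix.mul_kronecker_mul, polarF_mul_self, ih, Matrix.one_kronecker_one]
    rw [this, Matrix.submatrix_one_equiv]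


/-- **Corollary 2 (subgraph-based FC conversion for SCC decoding).**
Let `N = 2^n`, `H` an `N × N` upper-triangular matrix over `𝔽₂`, and
`Ac ⊆ {0,…,N−1}` the constrained positions.  Suppose `u·H = 0`.
Let `ℓ ∈ {0,…,N−2}`, let `ū` (the SCC hypothesis vector of length `ℓ+1`) agree
with `u` on all positions `j ≤ ℓ`, fix `t ∈ {1,…,n}`, and let
`x_{ℓ+1}^{(t)} = u_{𝒯(ℓ+1,t)}·F^{⊗t}`.  Then for every `j ∈ ℒ_{ℓ+1,t}`, i.e.
every `j ∈ Ac` with `j ≥ ℓ+1`, `j ∈ 𝒯(ℓ+1,t)` and `j ∉ 𝒯(ℓ+1,t−1)`: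
`(ū·H_{0:ℓ,ℒ_{ℓ+1,t}})_j + (x_{ℓ+1}^{(t)}·Q^{(ℓ+1,t)})_j = 0`, where
`Q^{(ℓ+1,t)} = (F^{⊗t})_{*,−s(ℓ+1,t)+𝒯'(ℓ+1,t)}·H_{𝒯'(ℓ+1,t),ℒ_{ℓ+1,t}}`;
entrywise the `j`-th coordinate reads `Σ_{k≤ℓ} ū_k·H_{k,j} +
Σ_{m<2^t} x_{ℓ+1}^{(t)}_m · (Σ_{k'<2^t, s(ℓ+1,t)+k' ≥ ℓ+1}
(F^{⊗t})_{m,k'}·H_{s(ℓ+1,t)+k',j}) = 0`. -/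
theorem scc_subgraph_FC_conversion (n : ℕ)
    (H : Matrix (Fin (2 ^ n)) (Fin (2 ^ n)) (ZMod 2))
    (hH : ∀ m j : Fin (2 ^ n), (j : ℕ) < (m : ℕ) → H m j = 0)
    (Ac : Finset (Fin (2 ^ n)))
    (u : Fin (2 ^ n) → ZMod 2) (hu : Matrix.vecMul u H = 0)
    (ℓ : ℕ) (hℓ : ℓ + 1 < 2 ^ n)
    (ubar : Fin (2 ^ n) → ZMod 2)
    (hubar : ∀ j : Fin (2 ^ n), (j : ℕ) ≤ ℓ → ubar j = u j)
    (t : ℕ) (ht1 : 1 ≤ t) (htn : t ≤ n)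
    (xt : Fin (2 ^ t) → ZMod 2)
    (hxt : xt = Matrix.vecMul (fun k => u (subIdx n t htn ⟨ℓ + 1, hℓ⟩ k)) (kronPow t)) :
    ∀ j : Fin (2 ^ n), j ∈ Ac → ℓ + 1 ≤ (j : ℕ) →
      (sIdx (ℓ + 1) t ≤ (j : ℕ) ∧ (j : ℕ) < sIdx (ℓ + 1) t + 2 ^ t) →
      ¬(sIdx (ℓ + 1) (t - 1) ≤ (j : ℕ) ∧ (j : ℕ) < sIdx (ℓ + 1) (t - 1) + 2 ^ (t - 1)) →
      (∑ k ∈ Finset.univ.filter (fun k : Fin (2 ^ n) => (k : ℕ) ≤ ℓ), ubar k * H k j)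
        + (∑ m : Fin (2 ^ t), xt m *
            ∑ k ∈ Finset.univ.filter
                (fun k : Fin (2 ^ t) => ℓ + 1 ≤ (subIdx n t htn ⟨ℓ + 1, hℓ⟩ k : ℕ)),
              kronPow t m k * H (subIdx n t htn ⟨ℓ + 1, hℓ⟩ k) j) = 0 := by
  intro j _ hj1 hjT _
  set sub : Fin (2 ^ t) → Fin (2 ^ n) := subIdx n t htn ⟨ℓ + 1, hℓ⟩ with hsub
  have hsubval : ∀ k : Fin (2 ^ t), (sub k : ℕ) = sIdx (ℓ + 1) t + (k : ℕ) := fun k => rfl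
  have hsle : sIdx (ℓ + 1) t ≤ ℓ + 1 := by
    rw [sIdx, Nat.mul_comm]; exact Nat.div_mul_le_self _ _
  -- Step A: vecMul xt K = u ∘ sub
  have hxtK : Matrix.vecMul xt (kronPow t) = fun k => u (sub k) := by
    rw [hxt, Matrix.vecMul_vecMul, kronPow_mul_self, Matrix.vecMul_one]
  -- Step B: second sum
  set S : Finset (Fin (2 ^ t)) :=
    Finset.univ.filter (fun k : Fin (2 ^ t) => ℓ + 1 ≤ (sub k : ℕ)) with hS
  have hB : (∑ m : Fin (2 ^ t), xt m * ∑ k ∈ S, kronPow t m k * H (sub k) j)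
      = ∑ k ∈ S, u (sub k) * H (sub k) j := by
    simp_rw [Finset.mul_sum]
    rw [Finset.sum_comm]
    refine Finset.sum_congr rfl fun k _ => ?_
    have hk : (∑ m : Fin (2 ^ t), xt m * kronPow t m k) = u (sub k) := by
      have := congrFun hxtK k
      simpa [Matrix.vecMul, dotProduct] using this
    simp_rw [← mul_assoc]
    rw [← Finset.sum_mul, hk]
  rw [hB]
  -- Step C: reindex second sum
  have himg : S.image sub
      = Finset.univ.filter (fun k : Fin (2 ^ n) =>
          ℓ + 1 ≤ (k : ℕ) ∧ (k : ℕ) < sIdx (ℓ + 1) t + 2 ^ t) := by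
    ext x
    simp only [Finset.mem_image, Finset.mem_filter, Finset.mem_univ, true_and, hS]
    constructor
    · rintro ⟨k, hk, rfl⟩
      have := k.isLt
      rw [hsubval] at hk ⊢
      omega
    · rintro ⟨h1, h2⟩
      refine ⟨⟨(x : ℕ) - sIdx (ℓ + 1) t, by omega⟩, ?_, ?_⟩
      · rw [hsubval]; simp; omega
      · apply Fin.ext; rw [hsubval]; simp; omega
  have hinj : ∀ a ∈ S, ∀ b ∈ S, sub a = sub b → a = b := by
    intro a _ b _ hab
    have : (sub a : ℕ) = (sub b : ℕ) := congrArg Fin.val hab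
    rw [hsubval, hsubval] at this
    exact Fin.ext (by omega)
  have hC : (∑ k ∈ S, u (sub k) * H (sub k) j)
      = ∑ k ∈ Finset.univ.filter (fun k : Fin (2 ^ n) => ℓ + 1 ≤ (k : ℕ)),
          u k * H k j := by
    rw [← Finset.sum_image (f := fun k => u k * H k j) hinj, himg]
    refine Finset.sum_subset ?_ ?_
    · intro x hx
      simp only [Finset.mem_filter, Finset.mem_univ, true_and] at hx ⊢
      exact hx.1
    · intro x hx hx2
      simp only [Finset.mem_filter, Finset.mem_univ, true_and] at hx hx2
      have : (j : ℕ) < (x : ℕ) := by omega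
      rw [hH x j this, mul_zero]
  rw [hC]
  -- Step D: combine
  have hD : (∑ k ∈ Finset.univ.filter (fun k : Fin (2 ^ n) => (k : ℕ) ≤ ℓ), ubar k * H k j)
      = ∑ k ∈ Finset.univ.filter (fun k : Fin (2 ^ n) => (k : ℕ) ≤ ℓ), u k * H k j := by
    refine Finset.sum_congr rfl fun k hk => ?_
    simp only [Finset.mem_filter, Finset.mem_univ, true_and] at hk
    rw [hubar k hk]
  rw [hD]
  have hcompl : Finset.univ.filter (fun k : Fin (2 ^ n) => ℓ + 1 ≤ (k : ℕ))
      = Finset.univ.filter (fun k : Fin (2 ^ n) => ¬((k : ℕ) ≤ ℓ)) := by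
    apply Finset.filter_congr; intro k _; simp
  rw [hcompl, Finset.sum_filter_add_sum_filter_not]
  have := congrFun hu j
  simpa [Matrix.vecMul, dotProduct] using this
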